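/- The map σ : C(S², ℝ) × SL(2,ℂ) → C(S², ℝ) given by σ(α, Λ)(z) := K(Λ,z)⁻¹ · α(Λ·z), where Λ·z is the Möbius action on the sphere (via stereographic projection) and K the conformal factor, defines a right group action: σ(α, ΛΜ) = σ(σ(α,Λ), Μ) and σ(α, I) = α. -/

import Mathlib

open scoped Classical

abbrev SL2C := Matrix.SpecialLinearGroup (Fin 2) ℂ

/-- The Möbius action of `Λ ∈ SL(2,ℂ)` on the Riemann sphere `S² ≅ ℂ ∪ {∞}`
(the sphere being identified with `ℂ ∪ {∞}` via stereographic projection). -/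
noncomputable def moeb (Λ : SL2C) : OnePoint ℂ → OnePoint ℂ :=
  OnePoint.rec
    (if (Λ : Matrix (Fin 2) (Fin 2) ℂ) 1 0 = 0 then OnePoint.infty
      else (((Λ : Matrix (Fin 2) (Fin 2) ℂ) 0 0 / (Λ : Matrix (Fin 2) (Fin 2) ℂ) 1 0 : ℂ) :
        OnePoint ℂ))
    (fun ζ =>
      if (Λ : Matrix (Fin 2) (Fin 2) ℂ) 1 0 * ζ + (Λ : Matrix (Fin 2) (Fin 2) ℂ) 1 1 = 0 then
        OnePoint.infty
      else ((((Λ : Matrix (Fin 2) (Fin 2) ℂ) 0 0 * ζ + (Λ : Matrix (Fin 2) (Fin 2) ℂ) 0 1) /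
        ((Λ : Matrix (Fin 2) (Fin 2) ℂ) 1 0 * ζ + (Λ : Matrix (Fin 2) (Fin 2) ℂ) 1 1) : ℂ) :
        OnePoint ℂ))

/-- The conformal factor `K(Λ,·)` on the Riemann sphere: on `ℂ` it is
`K(Λ,ζ) = (1+|ζ|²)/(|aζ+b|² + |cζ+d|²)`, extended to `ζ = ∞` by `K(Λ,∞) = 1/(|a|²+|c|²)`. -/
noncomputable def Kext (Λ : SL2C) : OnePoint ℂ → ℝ :=
  OnePoint.rec
    (1 / (‖(Λ : Matrix (Fin 2) (Fin 2) ℂ) 0 0‖ ^ 2 +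
      ‖(Λ : Matrix (Fin 2) (Fin 2) ℂ) 1 0‖ ^ 2))
    (fun ζ =>
      (1 + ‖ζ‖ ^ 2) /
        (‖(Λ : Matrix (Fin 2) (Fin 2) ℂ) 0 0 * ζ +
            (Λ : Matrix (Fin 2) (Fin 2) ℂ) 0 1‖ ^ 2 +
          ‖(Λ : Matrix (Fin 2) (Fin 2) ℂ) 1 0 * ζ +
            (Λ : Matrix (Fin 2) (Fin 2) ℂ) 1 1‖ ^ 2))

/-- The BMS action on functions `α : S² → ℝ`: `σ(α,Λ) := K(Λ,·)⁻¹ · (α ∘ Λ)`. -/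
noncomputable def bmsAct (α : OnePoint ℂ → ℝ) (Λ : SL2C) : OnePoint ℂ → ℝ :=
  fun z => (Kext Λ z)⁻¹ * α (moeb Λ z)

lemma moeb_coe (Λ : SL2C) (ζ : ℂ) : moeb Λ ζ =
  (if (Λ : Matrix (Fin 2) (Fin 2) ℂ) 1 0 * ζ + (Λ : Matrix (Fin 2) (Fin 2) ℂ) 1 1 = 0 then
        OnePoint.infty
      else ((((Λ : Matrix (Fin 2) (Fin 2) ℂ) 0 0 * ζ + (Λ : Matrix (Fin 2) (Fin 2) ℂ) 0 1) /
        ((Λ : Matrix (Fin 2) (Fin 2) ℂ) 1 0 * ζ + (Λ : Matrix (Fin 2) (Fin 2) ℂ) 1 1) : ℂ) :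
        OnePoint ℂ)) := rfl

lemma moeb_infty (Λ : SL2C) : moeb Λ OnePoint.infty =
  (if (Λ : Matrix (Fin 2) (Fin 2) ℂ) 1 0 = 0 then OnePoint.infty
      else (((Λ : Matrix (Fin 2) (Fin 2) ℂ) 0 0 / (Λ : Matrix (Fin 2) (Fin 2) ℂ) 1 0 : ℂ) :
        OnePoint ℂ)) := rfl

lemma Kext_coe (Λ : SL2C) (ζ : ℂ) : Kext Λ ζ =
      (1 + ‖ζ‖ ^ 2) /
        (‖(Λ : Matrix (Fin 2) (Fin 2) ℂ) 0 0 * ζ +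
            (Λ : Matrix (Fin 2) (Fin 2) ℂ) 0 1‖ ^ 2 +
          ‖(Λ : Matrix (Fin 2) (Fin 2) ℂ) 1 0 * ζ +
            (Λ : Matrix (Fin 2) (Fin 2) ℂ) 1 1‖ ^ 2) := rfl

lemma Kext_infty (Λ : SL2C) : Kext Λ OnePoint.infty =
    1 / (‖(Λ : Matrix (Fin 2) (Fin 2) ℂ) 0 0‖ ^ 2 +
      ‖(Λ : Matrix (Fin 2) (Fin 2) ℂ) 1 0‖ ^ 2) := rfl

lemma mul_entry (Λ M : SL2C) (i j : Fin 2) : ((Λ*M : SL2C) : Matrix (Fin 2) (Fin 2) ℂ) i j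
    = (Λ : Matrix (Fin 2) (Fin 2) ℂ) i 0 * (M : Matrix (Fin 2) (Fin 2) ℂ) 0 j
      + (Λ : Matrix (Fin 2) (Fin 2) ℂ) i 1 * (M : Matrix (Fin 2) (Fin 2) ℂ) 1 j := by
  simp [Matrix.mul_apply, Fin.sum_univ_two]

lemma detc (Λ : SL2C) : (Λ : Matrix (Fin 2) (Fin 2) ℂ) 0 0 * (Λ : Matrix (Fin 2) (Fin 2) ℂ) 1 1
    - (Λ : Matrix (Fin 2) (Fin 2) ℂ) 0 1 * (Λ : Matrix (Fin 2) (Fin 2) ℂ) 1 0 = 1 := by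
  have := Λ.2; rwa [Matrix.det_fin_two] at this

lemma sq_abs_add_ne_zero {x y : ℂ} (h : ¬(x = 0 ∧ y = 0)) :
    ‖x‖ ^ 2 + ‖y‖ ^ 2 ≠ 0 := by
  intro H
  apply h
  have h1 := (add_eq_zero_iff_of_nonneg (by positivity) (by positivity)).1 H
  constructor
  · simpa using h1.1
  · simpa using h1.2

lemma moeb_mul (Λ M : SL2C) (z : OnePoint ℂ) : moeb (Λ * M) z = moeb Λ (moeb M z) := by
  have hdΛ := detc Λ
  have hdM := detc M
  set a := (Λ : Matrix (Fin 2) (Fin 2) ℂ) 0 0 with ha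
  set b := (Λ : Matrix (Fin 2) (Fin 2) ℂ) 0 1 with hb
  set c := (Λ : Matrix (Fin 2) (Fin 2) ℂ) 1 0 with hc
  set d := (Λ : Matrix (Fin 2) (Fin 2) ℂ) 1 1 with hd
  set e := (M : Matrix (Fin 2) (Fin 2) ℂ) 0 0 with he
  set f := (M : Matrix (Fin 2) (Fin 2) ℂ) 0 1 with hf
  set g := (M : Matrix (Fin 2) (Fin 2) ℂ) 1 0 with hg
  set k := (M : Matrix (Fin 2) (Fin 2) ℂ) 1 1 with hk
  induction z using OnePoint.rec with
  | infty =>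
    rw [moeb_infty, moeb_infty]
    simp only [mul_entry]
    rw [← ha, ← hb, ← hc, ← hd, ← he, ← hg]
    by_cases hg0 : g = 0
    · rw [if_pos hg0, moeb_infty, ← ha, ← hc]
      have he0 : e ≠ 0 := by
        intro h0
        rw [hg0, h0] at hdM; simp at hdM
      rw [hg0]
      by_cases hc0 : c = 0
      · rw [if_pos (by rw [hc0]; ring), if_pos hc0]
      · rw [if_neg (by simp [mul_eq_zero, hc0, he0]), if_neg hc0]
        congr 1
        field_simp
        ring
    · rw [if_neg hg0, moeb_coe, ← ha, ← hb, ← hc, ← hd]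
      have hNg : a * (e / g) + b = (a * e + b * g) / g := by field_simp; try ring
      have hDg : c * (e / g) + d = (c * e + d * g) / g := by field_simp; try ring
      rw [hNg, hDg]
      have hcond : (c * e + d * g) / g = 0 ↔ c * e + d * g = 0 := by
        rw [div_eq_zero_iff]; simp [hg0]
      by_cases h0 : c * e + d * g = 0
      · rw [if_pos h0, if_pos (hcond.mpr h0)]
      · rw [if_neg h0, if_neg (fun hh => h0 (hcond.mp hh))]
        congr 1
        rw [div_div_div_cancel_right₀]
        exact hg0
  | coe ζ =>
    rw [moeb_coe, moeb_coe]
    simp only [mul_entry]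
    rw [← ha, ← hb, ← hc, ← hd, ← he, ← hf, ← hg, ← hk]
    have hL1 : (a * e + b * g) * ζ + (a * f + b * k) = a * (e * ζ + f) + b * (g * ζ + k) := by ring
    have hL2 : (c * e + d * g) * ζ + (c * f + d * k) = c * (e * ζ + f) + d * (g * ζ + k) := by ring
    rw [hL1, hL2]
    by_cases hD : g * ζ + k = 0
    · rw [if_pos hD, moeb_infty, ← ha, ← hc, hD]
      have hN : e * ζ + f ≠ 0 := by
        intro h0
        have : (0 : ℂ) = 1 := by linear_combination hdM - e * hD + g * h0
        exact zero_ne_one this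
      by_cases hc0 : c = 0
      · rw [if_pos (by rw [hc0]; ring), if_pos hc0]
      · rw [if_neg (by simp [mul_eq_zero, hc0, hN]), if_neg hc0]
        congr 1
        field_simp
        ring
    · rw [if_neg hD, moeb_coe, ← ha, ← hb, ← hc, ← hd]
      have hNg : a * ((e * ζ + f) / (g * ζ + k)) + b
          = (a * (e * ζ + f) + b * (g * ζ + k)) / (g * ζ + k) := by rw [← mul_div_assoc, div_add' _ _ _ hD]
      have hDg : c * ((e * ζ + f) / (g * ζ + k)) + d
          = (c * (e * ζ + f) + d * (g * ζ + k)) / (g * ζ + k) := by rw [← mul_div_assoc, div_add' _ _ _ hD]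
      rw [hNg, hDg]
      have hcond : (c * (e * ζ + f) + d * (g * ζ + k)) / (g * ζ + k) = 0
          ↔ c * (e * ζ + f) + d * (g * ζ + k) = 0 := by
        rw [div_eq_zero_iff]; simp [hD]
      by_cases h0 : c * (e * ζ + f) + d * (g * ζ + k) = 0
      · rw [if_pos h0, if_pos (hcond.mpr h0)]
      · rw [if_neg h0, if_neg (fun hh => h0 (hcond.mp hh))]
        congr 1
        rw [div_div_div_cancel_right₀]
        exact hD

lemma Kext_mul (Λ M : SL2C) (z : OnePoint ℂ) :
    Kext (Λ * M) z = Kext Λ (moeb M z) * Kext M z := by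
  have hdΛ := detc Λ
  have hdM := detc M
  set a := (Λ : Matrix (Fin 2) (Fin 2) ℂ) 0 0 with ha
  set b := (Λ : Matrix (Fin 2) (Fin 2) ℂ) 0 1 with hb
  set c := (Λ : Matrix (Fin 2) (Fin 2) ℂ) 1 0 with hc
  set d := (Λ : Matrix (Fin 2) (Fin 2) ℂ) 1 1 with hd
  set e := (M : Matrix (Fin 2) (Fin 2) ℂ) 0 0 with he
  set f := (M : Matrix (Fin 2) (Fin 2) ℂ) 0 1 with hf
  set g := (M : Matrix (Fin 2) (Fin 2) ℂ) 1 0 with hg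
  set k := (M : Matrix (Fin 2) (Fin 2) ℂ) 1 1 with hk
  have hac : ‖a‖ ^ 2 + ‖c‖ ^ 2 ≠ 0 := by
    apply sq_abs_add_ne_zero
    rintro ⟨h1, h2⟩
    have : (0 : ℂ) = 1 := by linear_combination hdΛ - d * h1 + b * h2
    exact zero_ne_one this
  induction z using OnePoint.rec with
  | infty =>
    rw [Kext_infty, Kext_infty, mul_entry, mul_entry]
    rw [← ha, ← hb, ← hc, ← hd, ← he, ← hg, moeb_infty, ← he, ← hg]
    by_cases hg0 : g = 0
    · rw [if_pos hg0, Kext_infty, ← ha, ← hc, hg0]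
      have he0 : e ≠ 0 := by
        intro h0; rw [hg0, h0] at hdM; simp at hdM
      have hea : ‖e‖ ≠ 0 := by simpa using he0
      rw [show a * e + b * 0 = a * e by ring, show c * e + d * 0 = c * e by ring,
        norm_mul, norm_mul, norm_zero]
      rw [div_mul_div_comm, one_mul]
      congr 1
      ring
    · rw [if_neg hg0, Kext_coe, ← ha, ← hb, ← hc, ← hd]
      have hga : ‖g‖ ≠ 0 := by simpa using hg0
      have hNg : a * (e / g) + b = (a * e + b * g) / g := by field_simp; try ring
      have hDg : c * (e / g) + d = (c * e + d * g) / g := by field_simp; try ring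
      have hPQ : ‖a * e + b * g‖ ^ 2 + ‖c * e + d * g‖ ^ 2 ≠ 0 := by
        apply sq_abs_add_ne_zero
        rintro ⟨hP, hQ⟩
        apply hg0
        linear_combination a * hQ - c * hP - g * hdΛ
      have heg : ‖e‖ ^ 2 + ‖g‖ ^ 2 ≠ 0 :=
        sq_abs_add_ne_zero (by rintro ⟨-, h2⟩; exact hg0 h2)
      rw [hNg, hDg, norm_div, norm_div, norm_div, div_pow, div_pow, div_pow]
      field_simp
      ring
  | coe ζ =>
    rw [Kext_coe, Kext_coe, mul_entry, mul_entry, mul_entry, mul_entry]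
    rw [← ha, ← hb, ← hc, ← hd, ← he, ← hf, ← hg, ← hk]
    have hL1 : (a * e + b * g) * ζ + (a * f + b * k) = a * (e * ζ + f) + b * (g * ζ + k) := by ring
    have hL2 : (c * e + d * g) * ζ + (c * f + d * k) = c * (e * ζ + f) + d * (g * ζ + k) := by ring
    rw [hL1, hL2, moeb_coe, ← he, ← hf, ← hg, ← hk]
    by_cases hD : g * ζ + k = 0
    · rw [if_pos hD, Kext_infty, ← ha, ← hc, hD]
      have hN : e * ζ + f ≠ 0 := by
        intro h0
        have : (0 : ℂ) = 1 := by linear_combination hdM - e * hD + g * h0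
        exact zero_ne_one this
      have hNa : ‖e * ζ + f‖ ≠ 0 := by simpa using hN
      rw [show a * (e * ζ + f) + b * 0 = a * (e * ζ + f) by ring,
        show c * (e * ζ + f) + d * 0 = c * (e * ζ + f) by ring,
        norm_mul, norm_mul, norm_zero]
      rw [div_mul_div_comm, one_mul]
      congr 1
      ring
    · rw [if_neg hD, Kext_coe, ← ha, ← hb, ← hc, ← hd]
      have hDa : ‖g * ζ + k‖ ≠ 0 := by simpa using hD
      have hNg : a * ((e * ζ + f) / (g * ζ + k)) + b
          = (a * (e * ζ + f) + b * (g * ζ + k)) / (g * ζ + k) := by rw [← mul_div_assoc, div_add' _ _ _ hD]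
      have hDg : c * ((e * ζ + f) / (g * ζ + k)) + d
          = (c * (e * ζ + f) + d * (g * ζ + k)) / (g * ζ + k) := by rw [← mul_div_assoc, div_add' _ _ _ hD]
      have hPQ : ‖a * (e * ζ + f) + b * (g * ζ + k)‖ ^ 2
          + ‖c * (e * ζ + f) + d * (g * ζ + k)‖ ^ 2 ≠ 0 := by
        apply sq_abs_add_ne_zero
        rintro ⟨hP, hQ⟩
        apply hD
        linear_combination a * hQ - c * hP - (g * ζ + k) * hdΛ
      have hND : ‖e * ζ + f‖ ^ 2 + ‖g * ζ + k‖ ^ 2 ≠ 0 :=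
        sq_abs_add_ne_zero (by rintro ⟨-, h2⟩; exact hD h2)
      rw [hNg, hDg, norm_div, norm_div, norm_div, div_pow, div_pow, div_pow]
      have hDa' : ‖ζ * g + k‖ ≠ 0 := by rwa [mul_comm ζ g]
      field_simp
      ring

lemma moeb_one (z : OnePoint ℂ) : moeb (1 : SL2C) z = z := by
  induction z using OnePoint.rec with
  | infty => rw [moeb_infty]; simp [Matrix.one_apply]
  | coe ζ => rw [moeb_coe]; simp [Matrix.one_apply]

lemma Kext_one (z : OnePoint ℂ) : Kext (1 : SL2C) z = 1 := by
  induction z using OnePoint.rec with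
  | infty => rw [Kext_infty]; simp [Matrix.one_apply]
  | coe ζ =>
    have h00 : ((1 : SL2C) : Matrix (Fin 2) (Fin 2) ℂ) 0 0 = 1 := by simp [Matrix.one_apply]
    have h01 : ((1 : SL2C) : Matrix (Fin 2) (Fin 2) ℂ) 0 1 = 0 := by simp [Matrix.one_apply]
    have h10 : ((1 : SL2C) : Matrix (Fin 2) (Fin 2) ℂ) 1 0 = 0 := by simp [Matrix.one_apply]
    have h11 : ((1 : SL2C) : Matrix (Fin 2) (Fin 2) ℂ) 1 1 = 1 := by simp [Matrix.one_apply]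
    rw [Kext_coe, h00, h01, h10, h11, one_mul, add_zero, zero_mul, zero_add, norm_one,
      one_pow, add_comm (‖ζ‖ ^ 2), div_self (by positivity)]

/-- The map `σ(α, Λ)(z) := K(Λ,z)⁻¹ · α(Λ·z)` defines a right group action of `SL(2,ℂ)` on
functions on the sphere: `σ(α, ΛΜ) = σ(σ(α,Λ), Μ)` and `σ(α, I) = α`. -/
theorem bmsAct_is_right_action :
    (∀ (α : OnePoint ℂ → ℝ) (Λ M : SL2C), bmsAct α (Λ * M) = bmsAct (bmsAct α Λ) M) ∧
    (∀ α : OnePoint ℂ → ℝ, bmsAct α (1 : SL2C) = α) := by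
  constructor
  · intro α Λ M
    funext z
    simp only [bmsAct, Kext_mul, moeb_mul, mul_inv]
    ring
  · intro α
    funext z
    simp [bmsAct, Kext_one, moeb_one]
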